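/- Let (S, μ, η) be a monad on C equipped with a differential combinator transformation ∂, and define λ_A := ⟨S(π₁), S(π₁+π₄)∘∂_{A×A}⟩ : S(A×A) → S(A)×S(A). Then λ is compatible with the vertical lift of the biproduct tangent structure: ⟨π₁,0,0,π₂⟩∘λ_A = (λ_A × λ_A)∘λ_{A×A}∘S(⟨π₁,0,0,π₂⟩) as morphisms S(A×A) → (S(A)×S(A))×(S(A)×S(A)), where ⟨π₁,0,0,π₂⟩ : X×X → (X×X)×(X×X) places the first coordinate in position 1 and the second coordinate in position 4. -/
import Mathlib


open CategoryTheory CategoryTheory.Limits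

universe v u

variable {C : Type u} [Category.{v} C] [Preadditive C] [HasBinaryBiproducts C]

/-- A differential combinator transformation on a monad `S`. -/
structure DiffCombTrans (S : Monad C) where
  d : ∀ A : C, S.obj A ⟶ S.obj (A ⊞ A)
  natural : ∀ {A B : C} (f : A ⟶ B), S.map f ≫ d B = d A ≫ S.map (biprod.map f f)
  dc1 : ∀ A : C, d A ≫ S.map biprod.fst = 0
  dc2 : ∀ A : C,
    d A ≫ S.map (biprod.lift biprod.fst (biprod.lift biprod.snd biprod.snd)) =
      d A ≫ S.map (biprod.lift biprod.fst (biprod.lift biprod.snd 0)) +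
      d A ≫ S.map (biprod.lift biprod.fst (biprod.lift 0 biprod.snd))
  dc3 : ∀ A : C, S.η.app A ≫ d A = biprod.lift 0 (𝟙 A) ≫ S.η.app (A ⊞ A)
  dc4 : ∀ A : C, S.μ.app A ≫ d A =
    d (S.obj A) ≫
      S.map (biprod.fst ≫ S.map (biprod.lift (𝟙 A) 0) + biprod.snd ≫ d A) ≫
      S.μ.app (A ⊞ A)
  dc5 : ∀ A : C, d A ≫ d (A ⊞ A) ≫
      S.map (biprod.lift (biprod.fst ≫ biprod.fst) (biprod.snd ≫ biprod.snd)) = d A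
  dc6 : ∀ A : C, d A ≫ d (A ⊞ A) ≫
      S.map (biprod.lift
        (biprod.lift (biprod.fst ≫ biprod.fst) (biprod.snd ≫ biprod.fst))
        (biprod.lift (biprod.fst ≫ biprod.snd) (biprod.snd ≫ biprod.snd))) =
      d A ≫ d (A ⊞ A)

/-- `λ_A := ⟨S(π₁), S(π₁+π₄) ∘ ∂_{A×A}⟩ : S(A×A) ⟶ S(A) × S(A)`. -/
noncomputable def lamOf (S : Monad C) (p : DiffCombTrans S) (A : C) :
    S.obj (A ⊞ A) ⟶ S.obj A ⊞ S.obj A :=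
  biprod.lift (S.map biprod.fst)
    (p.d (A ⊞ A) ≫ S.map (biprod.fst ≫ biprod.fst + biprod.snd ≫ biprod.snd))

/-- the vertical lift `⟨π₁,0,0,π₂⟩ : X × X ⟶ (X × X) × (X × X)`. -/
noncomputable def vertLift (X : C) : X ⊞ X ⟶ (X ⊞ X) ⊞ (X ⊞ X) :=
  biprod.lift (biprod.lift biprod.fst 0) (biprod.lift 0 biprod.snd)

/-- `λ` is compatible with the vertical lift of the biproduct tangent structure:
`⟨π₁,0,0,π₂⟩ ∘ λ_A = (λ_A × λ_A) ∘ λ_{A×A} ∘ S(⟨π₁,0,0,π₂⟩)`. -/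
theorem lamOf_vertLift (S : Monad C) (p : DiffCombTrans S) (A : C) :
    lamOf S p A ≫ vertLift (S.obj A) =
      S.map (vertLift A) ≫ lamOf S p (A ⊞ A) ≫
        biprod.map (lamOf S p A) (lamOf S p A) := by
  apply biprod.hom_ext <;> apply biprod.hom_ext <;>
    simp only [lamOf, vertLift, Category.assoc, biprod.lift_fst, biprod.lift_snd,
      biprod.lift_fst_assoc, biprod.lift_snd_assoc, biprod.map_fst, biprod.map_snd,
      comp_zero, zero_comp, Category.comp_id, ← Functor.map_comp, ← Functor.map_comp_assoc]
  · -- (1,2)-component: vanishes by DC.1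
    rw [← Category.assoc, p.natural, Category.assoc, ← Functor.map_comp]
    have hm : biprod.map (biprod.lift biprod.fst (0 : A ⊞ A ⟶ A))
          (biprod.lift biprod.fst (0 : A ⊞ A ⟶ A)) ≫
        (biprod.fst ≫ biprod.fst + biprod.snd ≫ biprod.snd) =
        biprod.fst ≫ (biprod.fst : A ⊞ A ⟶ A) := by
      simp [Preadditive.add_comp, Preadditive.comp_add]
    rw [hm, Functor.map_comp, ← Category.assoc, p.dc1, zero_comp]
  · -- (2,1)-component: vanishes by DC.1
    rw [← Category.assoc, p.natural, Category.assoc, ← Functor.map_comp]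
    have hm : biprod.map (biprod.lift (biprod.lift biprod.fst 0) (biprod.lift 0 biprod.snd))
          (biprod.lift (biprod.lift biprod.fst 0) (biprod.lift 0 (biprod.snd : A ⊞ A ⟶ A))) ≫
        ((biprod.fst ≫ biprod.fst + biprod.snd ≫ biprod.snd :
            ((A ⊞ A) ⊞ (A ⊞ A)) ⊞ ((A ⊞ A) ⊞ (A ⊞ A)) ⟶ A ⊞ A) ≫ biprod.fst) =
        biprod.fst ≫ (biprod.fst : A ⊞ A ⟶ A) := by
      simp [Preadditive.add_comp, Preadditive.comp_add]
    rw [hm, Functor.map_comp, ← Category.assoc, p.dc1, zero_comp]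
  · -- (2,2)-component: DC.5
    rw [← Category.assoc, p.natural, Category.assoc, ← Functor.map_comp_assoc]
    have hm : biprod.map (biprod.lift (biprod.lift biprod.fst 0) (biprod.lift 0 biprod.snd))
          (biprod.lift (biprod.lift biprod.fst 0) (biprod.lift 0 (biprod.snd : A ⊞ A ⟶ A))) ≫
        (biprod.fst ≫ biprod.fst + biprod.snd ≫ biprod.snd :
          ((A ⊞ A) ⊞ (A ⊞ A)) ⊞ ((A ⊞ A) ⊞ (A ⊞ A)) ⟶ A ⊞ A) =
        biprod.lift (biprod.fst ≫ biprod.fst)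
          ((biprod.snd : (A ⊞ A) ⊞ (A ⊞ A) ⟶ A ⊞ A) ≫ biprod.snd) := by
      ext <;> simp [Preadditive.add_comp, Preadditive.comp_add]
    rw [hm, reassoc_of% p.natural
      (biprod.lift (biprod.fst ≫ biprod.fst)
        ((biprod.snd : (A ⊞ A) ⊞ (A ⊞ A) ⟶ A ⊞ A) ≫ biprod.snd)),
      ← Functor.map_comp]
    have hm2 : biprod.map
          (biprod.lift (biprod.fst ≫ biprod.fst)
            ((biprod.snd : (A ⊞ A) ⊞ (A ⊞ A) ⟶ A ⊞ A) ≫ biprod.snd))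
          (biprod.lift (biprod.fst ≫ biprod.fst)
            ((biprod.snd : (A ⊞ A) ⊞ (A ⊞ A) ⟶ A ⊞ A) ≫ biprod.snd)) ≫
        (biprod.fst ≫ biprod.fst + biprod.snd ≫ biprod.snd :
          (A ⊞ A) ⊞ (A ⊞ A) ⟶ A) =
        biprod.lift (biprod.fst ≫ biprod.fst)
          ((biprod.snd : ((A ⊞ A) ⊞ (A ⊞ A)) ⊞ ((A ⊞ A) ⊞ (A ⊞ A)) ⟶ (A ⊞ A) ⊞ (A ⊞ A)) ≫
            biprod.snd) ≫
          (biprod.fst ≫ biprod.fst + biprod.snd ≫ biprod.snd) := by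
      simp [Preadditive.add_comp, Preadditive.comp_add]
    rw [hm2, Functor.map_comp, reassoc_of% p.dc5 (A ⊞ A)]
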